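/- Let B be an ordered category with finitely many objects and finite hom-sets whose additive cover ac(B) has finite products. Then ac(B) admits pull-backs. Moreover, for two morphisms α : Q → T and β : R → T in B, the pull-back of α and β in ac(B) is the direct sum ⊕_{i ∈ I_{α,β}} S_i, where Q × R = ⊕_{i∈I} S_i with structural morphisms χ_i : S_i → Q and ρ_i : S_i → R, and I_{α,β} ⊆ I is the subset of indices i with α ∘ χ_i = β ∘ ρ_i. -/

import Mathlib

open CategoryTheory Limits

universe v u

/-- Objects of the additive cover `ac(B)`: finite families of `B`-objects. -/
structure ACObj (B : Type u) : Type (u + 1) where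
  I : Type
  [fin : Finite I]
  obj : I → B

attribute [instance] ACObj.fin

/-- Morphisms of the additive cover. -/
structure ACHom {B : Type u} [Category.{v} B] (X Y : ACObj B) where
  f : X.I → Y.I
  φ : ∀ j : X.I, X.obj j ⟶ Y.obj (f j)

/-- The additive cover `ac(B)` of a category `B`. -/
instance ACCategory (B : Type u) [Category.{v} B] : Category (ACObj B) where
  Hom := ACHom
  id X := ⟨fun j => j, fun j => 𝟙 _⟩
  comp {X Y Z} g h := ⟨fun j => h.f (g.f j), fun j => g.φ j ≫ h.φ (g.f j)⟩
  id_comp f := by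
    cases f with
    | mk ff φ => simp only [Category.id_comp]
  comp_id f := by
    cases f with
    | mk ff φ => simp only [Category.comp_id]
  assoc f g h := by
    cases f; cases g; cases h; simp only [Category.assoc]

variable {B : Type u} [Category.{v} B]

/-- The canonical embedding `B → ac(B)` on objects. -/
abbrev single (Q : B) : ACObj B := ⟨PUnit, fun _ => Q⟩

/-- The canonical embedding on morphisms. -/
abbrev singleHom {Q T : B} (α : Q ⟶ T) : single Q ⟶ single T :=
  ⟨fun _ => PUnit.unit, fun _ => α⟩

lemma hom_ext_single {X : ACObj B} {Q : B} {g h : X ⟶ single Q}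
    (w : ∀ i : X.I, g.φ i = h.φ i) : g = h := by
  revert g h
  change ∀ {g h : ACHom X (single Q)}, _
  intro g h w
  cases g with
  | mk gf gφ =>
    cases h with
    | mk hf hφ =>
      obtain rfl : gf = hf := funext fun i => Subsingleton.elim _ _
      congr 1
      funext i
      exact w i

/-- Restriction of an additive-cover object to a subset of indices. -/
abbrev ACObj.restrict (X : ACObj B) (p : X.I → Prop) : ACObj B :=
  ⟨{i : X.I // p i}, fun i => X.obj i.1⟩

/-- The first structural morphism of the restricted object. -/
abbrev restrictFst {X : ACObj B} {Q R T : B} (α : Q ⟶ T) (β : R ⟶ T)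
    (χ : X ⟶ single Q) (ρ : X ⟶ single R) :
    (X.restrict (fun i => χ.φ i ≫ α = ρ.φ i ≫ β)) ⟶ single Q :=
  ⟨fun _ => PUnit.unit, fun i => χ.φ i.1⟩

/-- The second structural morphism of the restricted object. -/
abbrev restrictSnd {X : ACObj B} {Q R T : B} (α : Q ⟶ T) (β : R ⟶ T)
    (χ : X ⟶ single Q) (ρ : X ⟶ single R) :
    (X.restrict (fun i => χ.φ i ≫ α = ρ.φ i ≫ β)) ⟶ single R :=
  ⟨fun _ => PUnit.unit, fun i => ρ.φ i.1⟩

lemma restrict_comm {X : ACObj B} {Q R T : B} (α : Q ⟶ T) (β : R ⟶ T)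
    (χ : X ⟶ single Q) (ρ : X ⟶ single R) :
    restrictFst α β χ ρ ≫ singleHom α = restrictSnd α β χ ρ ≫ singleHom β :=
  hom_ext_single fun i => i.2


section AuxProof

lemma ACHom.congr_f {X Y : ACObj B} {g h : X ⟶ Y} (e : g = h) (i : X.I) :
    g.f i = h.f i := congrArg (fun k => ACHom.f k i) e

lemma ACHom.congr_phi {X Y : ACObj B} {g h : X ⟶ Y} (e : g = h) (i : X.I) :
    g.φ i ≫ eqToHom (congrArg Y.obj (ACHom.congr_f e i)) = h.φ i := by
  subst e; simp

lemma ACHom.ext' {X Y : ACObj B} {g h : X ⟶ Y} (hf : ∀ i, g.f i = h.f i)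
    (hφ : ∀ i, g.φ i ≫ eqToHom (congrArg Y.obj (hf i)) = h.φ i) : g = h := by
  revert g h
  change ∀ {g h : ACHom X Y} (hf : ∀ i, g.f i = h.f i),
    (∀ i, g.φ i ≫ eqToHom (congrArg Y.obj (hf i)) = h.φ i) → g = h
  intro g h hf hφ
  cases g with
  | mk gf gφ =>
    cases h with
    | mk hf' hφ' =>
      obtain rfl : gf = hf' := funext hf
      congr 1
      funext i
      simpa using hφ i

lemma congr_phi_single {X : ACObj B} {Q : B} {g h : X ⟶ single Q} (e : g = h) (i : X.I) :
    g.φ i = h.φ i := by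
  have h2 := ACHom.congr_phi e i
  simpa using h2

lemma eqToHom_comp_phi_single {X : ACObj B} {Q : B} (h : X ⟶ single Q) {j j' : X.I}
    (e : j = j') : eqToHom (congrArg X.obj e) ≫ h.φ j' = h.φ j := by
  subst e; simp

/-- Inclusion of a single component into an `ac(B)`-object. -/
def incl (X : ACObj B) (j : X.I) : single (X.obj j) ⟶ X :=
  ⟨fun _ => j, fun _ => 𝟙 _⟩

/-- Inclusion of a restriction. -/
def rincl (X : ACObj B) (p : X.I → Prop) : X.restrict p ⟶ X :=
  ⟨Subtype.val, fun _ => 𝟙 _⟩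

lemma hom_ext_incl {X Z : ACObj B} {g h : X ⟶ Z}
    (w : ∀ i : X.I, incl X i ≫ g = incl X i ≫ h) : g = h := by
  have hf : ∀ i, g.f i = h.f i := fun i => ACHom.congr_f (w i) PUnit.unit
  apply ACHom.ext' hf
  intro i
  have h2 := ACHom.congr_phi (w i) PUnit.unit
  rw [show ((incl X i ≫ g).φ PUnit.unit) = 𝟙 (X.obj i) ≫ g.φ i from rfl,
    show ((incl X i ≫ h).φ PUnit.unit) = 𝟙 (X.obj i) ≫ h.φ i from rfl,
    Category.id_comp, Category.id_comp] at h2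
  rw [show congrArg Z.obj (hf i) =
    congrArg Z.obj (ACHom.congr_f (w i) PUnit.unit) from rfl]
  exact h2

lemma singleHom_comp_incl {D X : ACObj B} (u : D ⟶ X) (k : D.I) :
    singleHom (u.φ k) ≫ incl X (u.f k) = incl D k ≫ u := by
  apply ACHom.ext'
  · intro x
    show (u.φ k ≫ 𝟙 _) ≫ eqToHom _ = 𝟙 _ ≫ u.φ k
    simp
  · exact fun _ => rfl

/-- Key cancellation lemma: in an ordered `B` whose additive cover has binary
products, morphisms out of a single object are left-cancellable. -/
lemma single_cancel [HasBinaryProducts (ACObj B)]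
    (hord : ∀ Q R : B, Nonempty (R ⟶ Q) → Nonempty (Q ⟶ R) → ∀ f : R ⟶ Q, IsIso f)
    {P S : B} (m : P ⟶ S) {C : ACObj B} {h1 h2 : single S ⟶ C}
    (hm : singleHom m ≫ h1 = singleHom m ≫ h2) : h1 = h2 := by
  let Y : ACObj B := (single S : ACObj B) ⨯ C
  let π : Y ⟶ single S := prod.fst
  let u : single S ⟶ Y := prod.lift (𝟙 _) h1
  let v : single S ⟶ Y := prod.lift (𝟙 _) h2
  have huπ : u ≫ π = 𝟙 (single S) := prod.lift_fst _ _
  have hvπ : v ≫ π = 𝟙 (single S) := prod.lift_fst _ _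
  have huv : singleHom m ≫ u = singleHom m ≫ v := by
    apply Limits.prod.hom_ext
    · simp only [Category.assoc]
      show singleHom m ≫ u ≫ π = singleHom m ≫ v ≫ π
      rw [huπ, hvπ]
    · simp only [Category.assoc]
      show singleHom m ≫ u ≫ (prod.snd : Y ⟶ C) = singleHom m ≫ v ≫ prod.snd
      rw [show u ≫ (prod.snd : Y ⟶ C) = h1 from prod.lift_snd _ _,
        show v ≫ (prod.snd : Y ⟶ C) = h2 from prod.lift_snd _ _]
      exact hm
  have hj : u.f PUnit.unit = v.f PUnit.unit := ACHom.congr_f huv PUnit.unit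
  have huφ : u.φ PUnit.unit ≫ π.φ (u.f PUnit.unit) = 𝟙 S :=
    congr_phi_single huπ PUnit.unit
  have hvφ : v.φ PUnit.unit ≫ π.φ (v.f PUnit.unit) = 𝟙 S :=
    congr_phi_single hvπ PUnit.unit
  have hiso : IsIso (π.φ (v.f PUnit.unit)) :=
    hord S (Y.obj (v.f PUnit.unit)) ⟨π.φ (v.f PUnit.unit)⟩ ⟨v.φ PUnit.unit⟩ _
  have huveq : u = v := by
    apply ACHom.ext' (fun _ => hj)
    intro x
    rw [← cancel_mono (π.φ (v.f PUnit.unit)), Category.assoc,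
      eqToHom_comp_phi_single π hj]
    exact huφ.trans hvφ.symm
  rw [show h1 = u ≫ (prod.snd : Y ⟶ C) from (prod.lift_snd _ _).symm,
    show h2 = v ≫ (prod.snd : Y ⟶ C) from (prod.lift_snd _ _).symm, huveq]

end AuxProof

section PB

variable [HasBinaryProducts (ACObj B)]

lemma incl_rincl {X : ACObj B} {p : X.I → Prop} (k : (X.restrict p).I) :
    incl (X.restrict p) k ≫ rincl X p = incl X k.1 := by
  apply ACHom.ext'
  · intro x
    show (𝟙 _ ≫ 𝟙 _) ≫ eqToHom _ = 𝟙 _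
    simp
  · exact fun _ => rfl

/-- The predicate cutting out the pull-back inside the product. -/
@[reducible] def pbP {A A' C : ACObj B} (f : A ⟶ C) (g : A' ⟶ C)
    (j : (A ⨯ A' : ACObj B).I) : Prop :=
  incl (A ⨯ A' : ACObj B) j ≫ (prod.fst : (A ⨯ A' : ACObj B) ⟶ A) ≫ f =
    incl (A ⨯ A' : ACObj B) j ≫ (prod.snd : (A ⨯ A' : ACObj B) ⟶ A') ≫ g

/-- The pull-back object of a general cospan. -/
@[reducible] noncomputable def pbObj {A A' C : ACObj B} (f : A ⟶ C) (g : A' ⟶ C) :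
    ACObj B :=
  (A ⨯ A' : ACObj B).restrict (pbP f g)

@[reducible] noncomputable def pbFst {A A' C : ACObj B} (f : A ⟶ C) (g : A' ⟶ C) :
    pbObj f g ⟶ A :=
  rincl _ _ ≫ prod.fst

@[reducible] noncomputable def pbSnd {A A' C : ACObj B} (f : A ⟶ C) (g : A' ⟶ C) :
    pbObj f g ⟶ A' :=
  rincl _ _ ≫ prod.snd

lemma pb_comm {A A' C : ACObj B} (f : A ⟶ C) (g : A' ⟶ C) :
    pbFst f g ≫ f = pbSnd f g ≫ g := by
  apply hom_ext_incl
  intro k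
  have h1 : incl (pbObj f g) k ≫ pbFst f g ≫ f =
      incl (A ⨯ A' : ACObj B) k.1 ≫ (prod.fst : (A ⨯ A' : ACObj B) ⟶ A) ≫ f := by
    rw [pbFst, ← Category.assoc, ← Category.assoc, incl_rincl, Category.assoc]
  have h2 : incl (pbObj f g) k ≫ pbSnd f g ≫ g =
      incl (A ⨯ A' : ACObj B) k.1 ≫ (prod.snd : (A ⨯ A' : ACObj B) ⟶ A') ≫ g := by
    rw [pbSnd, ← Category.assoc, ← Category.assoc, incl_rincl, Category.assoc]
  rw [h1, h2]
  exact k.2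

/-- The pull-back cone of a general cospan is a limit. -/
noncomputable def pbIsLimit
    (hord : ∀ Q R : B, Nonempty (R ⟶ Q) → Nonempty (Q ⟶ R) → ∀ f : R ⟶ Q, IsIso f)
    {A A' C : ACObj B} (f : A ⟶ C) (g : A' ⟶ C) :
    IsLimit (PullbackCone.mk _ _ (pb_comm f g)) := by
  have key : ∀ (s : PullbackCone f g) (k : s.pt.I),
      pbP f g ((prod.lift s.fst s.snd).f k) := by
    intro s k
    apply single_cancel hord ((prod.lift s.fst s.snd).φ k)
    have e1 : singleHom ((prod.lift s.fst s.snd).φ k) ≫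
        incl (A ⨯ A' : ACObj B) ((prod.lift s.fst s.snd).f k) ≫
          (prod.fst : (A ⨯ A' : ACObj B) ⟶ A) ≫ f = incl s.pt k ≫ s.fst ≫ f := by
      calc singleHom ((prod.lift s.fst s.snd).φ k) ≫
          incl (A ⨯ A' : ACObj B) ((prod.lift s.fst s.snd).f k) ≫
            (prod.fst : (A ⨯ A' : ACObj B) ⟶ A) ≫ f
          = (singleHom ((prod.lift s.fst s.snd).φ k) ≫
              incl (A ⨯ A' : ACObj B) ((prod.lift s.fst s.snd).f k)) ≫
              (prod.fst : (A ⨯ A' : ACObj B) ⟶ A) ≫ f := by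
            rw [Category.assoc]
        _ = (incl s.pt k ≫ prod.lift s.fst s.snd) ≫
              (prod.fst : (A ⨯ A' : ACObj B) ⟶ A) ≫ f := by
            rw [singleHom_comp_incl]
        _ = incl s.pt k ≫ (prod.lift s.fst s.snd ≫
              (prod.fst : (A ⨯ A' : ACObj B) ⟶ A)) ≫ f := by
            simp only [Category.assoc]
        _ = incl s.pt k ≫ s.fst ≫ f := by rw [prod.lift_fst]
    have e2 : singleHom ((prod.lift s.fst s.snd).φ k) ≫
        incl (A ⨯ A' : ACObj B) ((prod.lift s.fst s.snd).f k) ≫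
          (prod.snd : (A ⨯ A' : ACObj B) ⟶ A') ≫ g = incl s.pt k ≫ s.snd ≫ g := by
      calc singleHom ((prod.lift s.fst s.snd).φ k) ≫
          incl (A ⨯ A' : ACObj B) ((prod.lift s.fst s.snd).f k) ≫
            (prod.snd : (A ⨯ A' : ACObj B) ⟶ A') ≫ g
          = (singleHom ((prod.lift s.fst s.snd).φ k) ≫
              incl (A ⨯ A' : ACObj B) ((prod.lift s.fst s.snd).f k)) ≫
              (prod.snd : (A ⨯ A' : ACObj B) ⟶ A') ≫ g := by
            rw [Category.assoc]
        _ = (incl s.pt k ≫ prod.lift s.fst s.snd) ≫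
              (prod.snd : (A ⨯ A' : ACObj B) ⟶ A') ≫ g := by
            rw [singleHom_comp_incl]
        _ = incl s.pt k ≫ (prod.lift s.fst s.snd ≫
              (prod.snd : (A ⨯ A' : ACObj B) ⟶ A')) ≫ g := by
            simp only [Category.assoc]
        _ = incl s.pt k ≫ s.snd ≫ g := by rw [prod.lift_snd]
    rw [e1, e2, s.condition]
  let lift : ∀ s : PullbackCone f g, s.pt ⟶ pbObj f g := fun s =>
    ⟨fun k => ⟨(prod.lift s.fst s.snd).f k, key s k⟩, fun k => (prod.lift s.fst s.snd).φ k⟩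
  have hlift_rincl : ∀ s : PullbackCone f g,
      lift s ≫ rincl _ (pbP f g) = prod.lift s.fst s.snd := by
    intro s
    apply ACHom.ext'
    · intro k
      show ((prod.lift s.fst s.snd).φ k ≫ 𝟙 _) ≫ eqToHom _ = (prod.lift s.fst s.snd).φ k
      simp
    · exact fun _ => rfl
  apply PullbackCone.IsLimit.mk (pb_comm f g) lift
  · intro s
    show lift s ≫ rincl _ (pbP f g) ≫ prod.fst = s.fst
    rw [← Category.assoc, hlift_rincl, prod.lift_fst]
  · intro s
    show lift s ≫ rincl _ (pbP f g) ≫ prod.snd = s.snd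
    rw [← Category.assoc, hlift_rincl, prod.lift_snd]
  · intro s m' hm1 hm2
    have hm' : m' ≫ rincl _ (pbP f g) = prod.lift s.fst s.snd := by
      apply Limits.prod.hom_ext
      · rw [Category.assoc, prod.lift_fst]; exact hm1
      · rw [Category.assoc, prod.lift_snd]; exact hm2
    have e : m' ≫ rincl (A ⨯ A' : ACObj B) (pbP f g) =
        lift s ≫ rincl (A ⨯ A' : ACObj B) (pbP f g) := by
      rw [hm', hlift_rincl]
    have hf : ∀ k, m'.f k = (lift s).f k := fun k =>
      Subtype.ext (ACHom.congr_f e k)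
    apply ACHom.ext' hf
    intro k
    have h2 := ACHom.congr_phi e k
    rw [show ((m' ≫ rincl (A ⨯ A' : ACObj B) (pbP f g)).φ k) = m'.φ k ≫ 𝟙 _ from rfl,
      show ((lift s ≫ rincl (A ⨯ A' : ACObj B) (pbP f g)).φ k) =
        (lift s).φ k ≫ 𝟙 _ from rfl, Category.comp_id, Category.comp_id] at h2
    rw [show congrArg (A ⨯ A' : ACObj B).obj (ACHom.congr_f e k) =
      congrArg (pbObj f g).obj (hf k) from rfl] at h2
    exact h2

end PB

/-- If the additive cover `ac(B)` of an ordered category `B` (with finitely many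
objects and finite hom-sets) has binary products, then `ac(B)` admits
pull-backs; moreover, given `α : Q ⟶ T`, `β : R ⟶ T` in `B` and a binary product
`X = Q × R` with structural morphisms `χ`, `ρ`, the restriction of `X` to the
indices `i` with `χ_i ≫ α = ρ_i ≫ β` is a pull-back of `α` and `β`. -/
theorem additive_cover_has_pullbacks
    [Finite B] (hfin : ∀ Q R : B, Finite (Q ⟶ R))
    (hord : ∀ Q R : B, Nonempty (R ⟶ Q) → Nonempty (Q ⟶ R) →
      ∀ f : R ⟶ Q, IsIso f)
    [HasBinaryProducts (ACObj B)] :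
    HasPullbacks (ACObj B) ∧
    ∀ (Q R T : B) (α : Q ⟶ T) (β : R ⟶ T)
      (X : ACObj B) (χ : X ⟶ single Q) (ρ : X ⟶ single R)
      (_ : IsLimit (BinaryFan.mk χ ρ)),
      Nonempty (IsLimit (PullbackCone.mk _ _ (restrict_comm α β χ ρ))) := by
  constructor
  · exact @hasPullbacks_of_hasLimit_cospan _ _
      (fun {X Y Z f g} => HasLimit.mk ⟨_, pbIsLimit hord f g⟩)
  · intro Q R T α β X χ ρ hL
    refine ⟨?_⟩
    have fac : ∀ {D : ACObj B} (a : D ⟶ single Q) (b : D ⟶ single R),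
        (hL.lift (BinaryFan.mk a b)) ≫ χ = a ∧ (hL.lift (BinaryFan.mk a b)) ≫ ρ = b := by
      intro D a b
      constructor
      · exact hL.fac (BinaryFan.mk a b) ⟨WalkingPair.left⟩
      · exact hL.fac (BinaryFan.mk a b) ⟨WalkingPair.right⟩
    have key : ∀ (s : PullbackCone (singleHom α) (singleHom β)) (k : s.pt.I),
        χ.φ ((hL.lift (BinaryFan.mk s.fst s.snd)).f k) ≫ α =
          ρ.φ ((hL.lift (BinaryFan.mk s.fst s.snd)).f k) ≫ β := by
      intro s k
      obtain ⟨hu1, hu2⟩ := fac s.fst s.snd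
      have hfst : s.fst.φ k = (hL.lift (BinaryFan.mk s.fst s.snd)).φ k ≫
          χ.φ ((hL.lift (BinaryFan.mk s.fst s.snd)).f k) := (congr_phi_single hu1 k).symm
      have hsnd : s.snd.φ k = (hL.lift (BinaryFan.mk s.fst s.snd)).φ k ≫
          ρ.φ ((hL.lift (BinaryFan.mk s.fst s.snd)).f k) := (congr_phi_single hu2 k).symm
      have hcond : s.fst.φ k ≫ α = s.snd.φ k ≫ β := congr_phi_single s.condition k
      have hm : (hL.lift (BinaryFan.mk s.fst s.snd)).φ k ≫
          (χ.φ ((hL.lift (BinaryFan.mk s.fst s.snd)).f k) ≫ α) =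
          (hL.lift (BinaryFan.mk s.fst s.snd)).φ k ≫
          (ρ.φ ((hL.lift (BinaryFan.mk s.fst s.snd)).f k) ≫ β) := by
        rw [← Category.assoc, ← Category.assoc, ← hfst, ← hsnd]
        exact hcond
      have hsc := single_cancel hord ((hL.lift (BinaryFan.mk s.fst s.snd)).φ k)
        (h1 := singleHom (χ.φ ((hL.lift (BinaryFan.mk s.fst s.snd)).f k) ≫ α))
        (h2 := singleHom (ρ.φ ((hL.lift (BinaryFan.mk s.fst s.snd)).f k) ≫ β))
        (by
          apply hom_ext_single
          intro x
          exact hm)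
      exact congr_phi_single hsc PUnit.unit
    let lift : ∀ s : PullbackCone (singleHom α) (singleHom β),
        s.pt ⟶ X.restrict (fun i => χ.φ i ≫ α = ρ.φ i ≫ β) := fun s =>
      ⟨fun k => ⟨(hL.lift (BinaryFan.mk s.fst s.snd)).f k, key s k⟩,
        fun k => (hL.lift (BinaryFan.mk s.fst s.snd)).φ k⟩
    have hlift_rincl : ∀ s : PullbackCone (singleHom α) (singleHom β),
        lift s ≫ rincl X (fun i => χ.φ i ≫ α = ρ.φ i ≫ β) =
          hL.lift (BinaryFan.mk s.fst s.snd) := by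
      intro s
      apply ACHom.ext'
      · intro k
        show ((hL.lift (BinaryFan.mk s.fst s.snd)).φ k ≫ 𝟙 _) ≫ eqToHom _ =
          (hL.lift (BinaryFan.mk s.fst s.snd)).φ k
        simp
      · exact fun _ => rfl
    have hrχ : rincl X (fun i => χ.φ i ≫ α = ρ.φ i ≫ β) ≫ χ = restrictFst α β χ ρ := by
      apply hom_ext_single
      intro k
      exact Category.id_comp _
    have hrρ : rincl X (fun i => χ.φ i ≫ α = ρ.φ i ≫ β) ≫ ρ = restrictSnd α β χ ρ := by
      apply hom_ext_single
      intro k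
      exact Category.id_comp _
    apply PullbackCone.IsLimit.mk (restrict_comm α β χ ρ) lift
    · intro s
      rw [show restrictFst α β χ ρ =
        rincl X (fun i => χ.φ i ≫ α = ρ.φ i ≫ β) ≫ χ from hrχ.symm,
        ← Category.assoc, hlift_rincl]
      exact (fac s.fst s.snd).1
    · intro s
      rw [show restrictSnd α β χ ρ =
        rincl X (fun i => χ.φ i ≫ α = ρ.φ i ≫ β) ≫ ρ from hrρ.symm,
        ← Category.assoc, hlift_rincl]
      exact (fac s.fst s.snd).2
    · intro s m' hm1 hm2
      have e : m' ≫ rincl X (fun i => χ.φ i ≫ α = ρ.φ i ≫ β) =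
          lift s ≫ rincl X (fun i => χ.φ i ≫ α = ρ.φ i ≫ β) := by
        rw [hlift_rincl]
        apply BinaryFan.IsLimit.hom_ext hL
        · show (m' ≫ rincl X _) ≫ χ = hL.lift (BinaryFan.mk s.fst s.snd) ≫ χ
          rw [Category.assoc, hrχ, hm1, (fac s.fst s.snd).1]
        · show (m' ≫ rincl X _) ≫ ρ = hL.lift (BinaryFan.mk s.fst s.snd) ≫ ρ
          rw [Category.assoc, hrρ, hm2, (fac s.fst s.snd).2]
      have hf : ∀ k, m'.f k = (lift s).f k := fun k =>
        Subtype.ext (ACHom.congr_f e k)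
      apply ACHom.ext' hf
      intro k
      have h2 := ACHom.congr_phi e k
      rw [show ((m' ≫ rincl X (fun i => χ.φ i ≫ α = ρ.φ i ≫ β)).φ k) =
          m'.φ k ≫ 𝟙 _ from rfl,
        show ((lift s ≫ rincl X (fun i => χ.φ i ≫ α = ρ.φ i ≫ β)).φ k) =
          (lift s).φ k ≫ 𝟙 _ from rfl, Category.comp_id, Category.comp_id] at h2
      rw [show congrArg X.obj (ACHom.congr_f e k) =
        congrArg (X.restrict (fun i => χ.φ i ≫ α = ρ.φ i ≫ β)).obj (hf k) from rfl] at h2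
      exact h2
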